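/- Let μ = i₁i₂⋯i_r and ν = j₁j₂⋯j_s with r, s ≥ 1, where i₁ ≥ i₂ ≥ ⋯ ≥ i_r and j₁ ≥ j₂ ≥ ⋯ ≥ j_s are Lyndon words. Suppose i₁ ≥ j₁, that the first letters of i₁ and j₁ are equal (call this letter a), and that a occurs exactly twice in i₁ and exactly twice in j₁. Then the lexicographically greatest shuffle w of μ and ν satisfies: either w = i₁ ⬝ w′ for some shuffle w′ of i₂⋯i_r and ν, or i₁ = j₁ and w = j₁ ⬝ w″ for some shuffle w″ of μ and j₂⋯j_s. In particular, if i₁ > j₁ then the first alternative holds. -/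

import Mathlib

/-- `IsShuffle μ ν w` means that `w` is an interleaving (shuffle) of the words `μ` and `ν`. -/
inductive IsShuffle {α : Type*} : List α → List α → List α → Prop
  | nil : IsShuffle [] [] []
  | left {a : α} {μ ν w : List α} : IsShuffle μ ν w → IsShuffle (a :: μ) ν (a :: w)
  | right {a : α} {μ ν w : List α} : IsShuffle μ ν w → IsShuffle μ (a :: ν) (a :: w)

/-- A nonempty word `u` is a Lyndon word if it is lexicographically strictly smaller than
every proper nonempty suffix of itself. -/
def IsLyndon {α : Type*} [LinearOrder α] (u : List α) : Prop :=
  u ≠ [] ∧ ∀ v : List α, v ≠ [] → v ≠ u → v <:+ u → u < v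

set_option linter.unusedSectionVars false
section Helpers
variable {α : Type*} [LinearOrder α]

lemma lex_lt_iff {a b : α} {x y : List α} :
    (a :: x : List α) < b :: y ↔ a < b ∨ (a = b ∧ x < y) := by
  constructor
  · intro h
    have h' : List.Lex (· < ·) (a :: x) (b :: y) := h
    cases h' with
    | cons h => exact Or.inr ⟨rfl, h⟩
    | rel h => exact Or.inl h
  · rintro (h | ⟨rfl, h⟩)
    · exact List.Lex.rel h
    · exact List.Lex.cons h

lemma lex_le_iff {a b : α} {x y : List α} :
    (a :: x : List α) ≤ b :: y ↔ a < b ∨ (a = b ∧ x ≤ y) := by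
  rw [le_iff_lt_or_eq, le_iff_lt_or_eq, lex_lt_iff]
  constructor
  · rintro ((h | ⟨rfl, h⟩) | h)
    · exact Or.inl h
    · exact Or.inr ⟨rfl, Or.inl h⟩
    · injection h with h1 h2
      exact Or.inr ⟨h1, Or.inr h2⟩
  · rintro (h | ⟨rfl, (h | rfl)⟩)
    · exact Or.inl (Or.inl h)
    · exact Or.inl (Or.inr ⟨rfl, h⟩)
    · exact Or.inr rfl

lemma not_lt_nil' (x : List α) : ¬ x < ([] : List α) :=
  List.not_lt_nil x

lemma eq_nil_of_le_nil {x : List α} (h : x ≤ ([] : List α)) : x = [] := by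
  rcases le_iff_lt_or_eq.1 h with h | h
  · exact absurd h (not_lt_nil' x)
  · exact h

lemma head_le_of_le {a b : α} {x y : List α} (h : (a :: x : List α) ≤ b :: y) : a ≤ b := by
  rcases lex_le_iff.1 h with h | ⟨rfl, _⟩
  · exact h.le
  · exact le_rfl

lemma cons_le_cons_iff {a : α} {x y : List α} : (a :: x : List α) ≤ a :: y ↔ x ≤ y := by
  rw [lex_le_iff]; simp [lt_irrefl]

lemma lt_append_of_lt_of_not_prefix :
    ∀ (x y : List α), x < y → ¬ x <+: y → ∀ s t, x ++ s < y ++ t := by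
  intro x
  induction x with
  | nil => intro y _ hp; exact absurd (List.nil_prefix) hp
  | cons a x' ih =>
    intro y hlt hp s t
    cases y with
    | nil => exact absurd hlt (not_lt_nil' _)
    | cons b y' =>
      rcases lex_lt_iff.1 hlt with h | ⟨rfl, h⟩
      · exact List.Lex.rel h
      · have hp' : ¬ x' <+: y' := fun hh => hp (List.cons_prefix_cons.2 ⟨rfl, hh⟩)
        exact List.Lex.cons (ih y' h hp' s t)

end Helpers

section Shuffle
variable {α : Type*} [LinearOrder α]

lemma shuffle_nil_left : ∀ (v : List α), IsShuffle [] v v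
  | [] => IsShuffle.nil
  | _ :: v => IsShuffle.right (shuffle_nil_left v)

lemma shuffle_append_self : ∀ (u v : List α), IsShuffle u v (u ++ v)
  | [], v => shuffle_nil_left v
  | _ :: u, v => IsShuffle.left (shuffle_append_self u v)

lemma IsShuffle.symm {u v w : List α} (h : IsShuffle u v w) : IsShuffle v u w := by
  induction h with
  | nil => exact IsShuffle.nil
  | left _ ih => exact IsShuffle.right ih
  | right _ ih => exact IsShuffle.left ih

lemma shuffle_prepend {b : List α} {X R t : List α} (h : IsShuffle X R t) :
    IsShuffle (b ++ X) R (b ++ t) := by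
  induction b with
  | nil => exact h
  | cons c b ih => exact IsShuffle.left ih

/-- Key exchange lemma: moving a block `z` from the front of the larger word `U`'s side to
the front of the `V`-side only increases the available shuffles. -/
lemma sstar : ∀ (n : ℕ) (z U V x : List α), U.length + V.length = n → V ≤ U →
    IsShuffle (z ++ U) V x → ∃ t, IsShuffle U (z ++ V) t ∧ x ≤ t := by
  intro n
  induction n using Nat.strong_induction_on with
  | _ n IH =>
    intro z
    induction z with
    | nil => exact fun U V x _ _ hx => ⟨x, hx, le_rfl⟩
    | cons c z₂ ihz =>
      intro U V x hn hVU hx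
      cases hx with
      | left h =>
        obtain ⟨t, ht, hle⟩ := ihz U V _ hn hVU h
        exact ⟨c :: t, IsShuffle.right ht, cons_le_cons_iff.2 hle⟩
      | @right b _ V₂ x' h =>
        cases U with
        | nil => exact absurd (eq_nil_of_le_nil hVU) (by simp)
        | cons d U₂ =>
          have hbd : b ≤ d := head_le_of_le hVU
          rcases lt_or_eq_of_le hbd with hbd | rfl
          · exact ⟨d :: (U₂ ++ ((c :: z₂) ++ (b :: V₂))), IsShuffle.left (shuffle_append_self _ _),
              le_of_lt (List.Lex.rel hbd)⟩
          · have hVU₂ : V₂ ≤ U₂ := by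
              rcases lex_le_iff.1 hVU with h' | ⟨_, h'⟩
              · exact absurd h' (lt_irrefl _)
              · exact h'
            have h' : IsShuffle (((c :: z₂) ++ [b]) ++ U₂) V₂ x' := by
              rwa [List.append_assoc, List.singleton_append]
            obtain ⟨t, ht, hle⟩ := IH (U₂.length + V₂.length)
              (by simp only [List.length_cons] at hn; omega) ((c :: z₂) ++ [b]) U₂ V₂ x' rfl hVU₂ h'
            rw [List.append_assoc, List.singleton_append] at ht
            exact ⟨b :: t, IsShuffle.left ht, cons_le_cons_iff.2 hle⟩

lemma exists_dominating {c : α} {u' v s : List α} (hge : v ≤ c :: u')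
    (hs : IsShuffle (c :: u') v s) : ∃ t, IsShuffle u' v t ∧ s ≤ c :: t := by
  cases hs with
  | left h => exact ⟨_, h, le_rfl⟩
  | @right b _ v' s₀ h =>
    have hbc : b ≤ c := head_le_of_le hge
    rcases lt_or_eq_of_le hbc with hbc | rfl
    · exact ⟨u' ++ (b :: v'), shuffle_append_self _ _, le_of_lt (List.Lex.rel hbc)⟩
    · have hv'u' : v' ≤ u' := by
        rcases lex_le_iff.1 hge with h' | ⟨_, h'⟩
        · exact absurd h' (lt_irrefl _)
        · exact h'
      obtain ⟨t, ht, hle⟩ := sstar (u'.length + v'.length) [b] u' v' s₀ rfl hv'u' h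
      exact ⟨t, ht, cons_le_cons_iff.2 hle⟩

lemma greedy_step {c : α} {u' v w : List α} (hge : v ≤ c :: u')
    (hw : IsShuffle (c :: u') v w) (hmax : ∀ t, IsShuffle (c :: u') v t → t ≤ w) :
    ∃ w₁, IsShuffle u' v w₁ ∧ w = c :: w₁ ∧ ∀ t, IsShuffle u' v t → t ≤ w₁ := by
  obtain ⟨t, ht, hle⟩ := exists_dominating hge hw
  have h2 : c :: t ≤ w := hmax _ (IsShuffle.left ht)
  have heq : w = c :: t := le_antisymm hle h2
  refine ⟨t, ht, heq, fun t₂ ht₂ => ?_⟩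
  have h3 : c :: t₂ ≤ w := hmax _ (IsShuffle.left ht₂)
  rw [heq] at h3
  exact cons_le_cons_iff.1 h3

lemma consume : ∀ (b : List α) (X R w : List α), IsShuffle (b ++ X) R w →
    (∀ t, IsShuffle (b ++ X) R t → t ≤ w) →
    (∀ b₁ b₂, b = b₁ ++ b₂ → b₂ ≠ [] → R ≤ b₂ ++ X) →
    ∃ w', IsShuffle X R w' ∧ w = b ++ w' ∧ ∀ t, IsShuffle X R t → t ≤ w' := by
  intro b
  induction b with
  | nil => exact fun X R w hw hmax _ => ⟨w, hw, rfl, hmax⟩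
  | cons c b₃ ih =>
    intro X R w hw hmax hcond
    have hge : R ≤ c :: (b₃ ++ X) := hcond [] (c :: b₃) rfl (by simp)
    obtain ⟨w₁, hw₁, rfl, hmax₁⟩ := greedy_step hge hw hmax
    obtain ⟨w', hw', rfl, hmax'⟩ := ih X R w₁ hw₁ hmax₁
      (fun b₁ b₂ h hne => hcond (c :: b₁) b₂ (by rw [h]; rfl) hne)
    exact ⟨w', hw', rfl, hmax'⟩
end Shuffle

section Main
variable {α : Type*} [LinearOrder α]

lemma lt_of_append_lt : ∀ (z x y : List α), z ++ x < z ++ y → x < y := by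
  intro z
  induction z with
  | nil => exact fun x y h => h
  | cons c z' ih =>
    intro x y h
    rcases lex_lt_iff.1 h with h | ⟨_, h⟩
    · exact absurd h (lt_irrefl _)
    · exact ih x y h

lemma decomp {a : α} {u : List α} (hu : u ≠ []) (hh : u.head hu = a)
    (hc : List.count a u = 2) : ∃ p q, u = a :: (p ++ a :: q) ∧ a ∉ p ∧ a ∉ q := by
  obtain ⟨T, hT⟩ : ∃ T, u = a :: T := ⟨u.tail, by rw [← hh, List.cons_head_tail]⟩
  subst hT
  rw [List.count_cons_self] at hc
  have h1 : List.count a T = 1 := by omega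
  have hmem : a ∈ T := by
    by_contra h
    rw [List.count_eq_zero_of_not_mem h] at h1; omega
  obtain ⟨p, q, rfl⟩ := List.append_of_mem hmem
  rw [List.count_append, List.count_cons_self] at h1
  exact ⟨p, q, rfl, List.count_eq_zero.1 (by omega), List.count_eq_zero.1 (by omega)⟩

lemma lyndon_key {a : α} {p q : List α} (hL : IsLyndon (a :: (p ++ a :: q))) :
    ∀ s t, (p ++ a :: q) ++ s < q ++ t := by
  have hsuf : (a :: q) <:+ (a :: (p ++ a :: q)) := by
    have h : a :: (p ++ a :: q) = (a :: p) ++ (a :: q) := by simp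
    rw [h]; exact List.suffix_append _ _
  have hne : (a :: q) ≠ (a :: (p ++ a :: q)) := by
    intro h
    have := congrArg List.length h
    simp at this
    omega
  have hlt := hL.2 _ (by simp) hne hsuf
  have hlt' : p ++ a :: q < q := by
    rcases lex_lt_iff.1 hlt with h | ⟨_, h⟩
    · exact absurd h (lt_irrefl _)
    · exact h
  have hnp : ¬ (p ++ a :: q) <+: q := by
    intro h
    have := h.length_le
    simp at this
    omega
  exact lt_append_of_lt_of_not_prefix _ _ hlt' hnp

lemma suffix_head_eq {a : α} : ∀ (p : List α) {q s : List α}, a ∉ p → a ∉ q →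
    s <:+ p ++ a :: q → ∀ (h : s ≠ []), s.head h = a → s = a :: q := by
  intro p
  induction p with
  | nil =>
    intro q s _ hq hs hne hh
    rw [List.nil_append] at hs
    rcases List.suffix_cons_iff.1 hs with h | h
    · exact h
    · exfalso
      exact hq (h.subset (hh ▸ List.head_mem hne))
  | cons e p' ih =>
    intro q s hp hq hs hne hh
    rcases List.suffix_cons_iff.1 hs with h | h
    · exfalso
      apply hp
      have he : e = a := by subst h; simpa using hh
      rw [he]; exact List.mem_cons_self
    · exact ih (fun hm => hp (List.mem_cons_of_mem _ hm)) hq h hne hh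

/-- The block-consumption condition for the block `a :: (p ++ a :: q)`. -/
lemma suffix_cond {a : α} {p q M O : List α}
    (hLB : IsLyndon (a :: (p ++ a :: q))) (hap : a ∉ p) (haq : a ∉ q)
    (hO : O ≤ (p ++ a :: q) ++ M) :
    ∀ b₁ b₂, (a :: (p ++ a :: q)) = b₁ ++ b₂ → b₂ ≠ [] → (a :: O) ≤ b₂ ++ M := by
  intro b₁ b₂ hsplit hne
  cases b₁ with
  | nil =>
    rw [List.nil_append] at hsplit
    rw [← hsplit, List.cons_append]
    exact cons_le_cons_iff.2 hO
  | cons e b₁' =>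
    have hsuf : b₂ <:+ (a :: (p ++ a :: q)) := ⟨e :: b₁', hsplit.symm⟩
    have hneq : b₂ ≠ (a :: (p ++ a :: q)) := by
      intro h
      have := congrArg List.length hsplit
      rw [h] at this
      simp at this
      omega
    have hlt : (a :: (p ++ a :: q)) < b₂ := hLB.2 _ hne hneq hsuf
    obtain ⟨c, t, rfl⟩ : ∃ c t, b₂ = c :: t := by
      cases b₂ with
      | nil => exact absurd rfl hne
      | cons c t => exact ⟨c, t, rfl⟩
    have hac : a ≤ c := List.head_le_of_lt hlt
    rcases lt_or_eq_of_le hac with hac | hac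
    · exact le_of_lt (List.Lex.rel hac)
    · subst hac
      have hsuf' : (a :: t) <:+ p ++ a :: q := by
        rcases List.suffix_cons_iff.1 hsuf with h | h
        · exact absurd h hneq
        · exact h
      have hb₂ : (a :: t) = a :: q := suffix_head_eq p hap haq hsuf' (by simp) rfl
      rw [hb₂, List.cons_append]
      apply cons_le_cons_iff.2
      exact le_of_lt (lt_of_le_of_lt hO (lyndon_key hLB M M))

end Main

/-- with `i₁ ≥ j₁`, equal first letters `a`, and `a` occurring exactly twice in
`i₁` and exactly twice in `j₁`, the lexicographically greatest shuffle `w` of `μ = i₁ ⋯ i_r`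
and `ν = j₁ ⋯ j_s` is of the form `i₁ ++ (shuffle of i₂ ⋯ i_r and ν)`, or `i₁ = j₁` and
`w = j₁ ++ (shuffle of μ and j₂ ⋯ j_s)`. In particular, if `i₁ > j₁` then the first
alternative holds. -/
theorem stmt3 {α : Type*} [LinearOrder α]
    (i₁ : List α) (itl : List (List α)) (j₁ : List α) (jtl : List (List α))
    (hLI : ∀ u ∈ i₁ :: itl, IsLyndon u)
    (hLJ : ∀ u ∈ j₁ :: jtl, IsLyndon u)
    (hdecI : List.Chain' (fun u v : List α => v ≤ u) (i₁ :: itl))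
    (hdecJ : List.Chain' (fun u v : List α => v ≤ u) (j₁ :: jtl))
    (hi : i₁ ≠ []) (hj : j₁ ≠ [])
    (hij : j₁ ≤ i₁)
    (hhead : i₁.head hi = j₁.head hj)
    (hcounti : List.count (i₁.head hi) i₁ = 2)
    (hcountj : List.count (i₁.head hi) j₁ = 2)
    (w : List α)
    (hshuf : IsShuffle ((i₁ :: itl).flatten) ((j₁ :: jtl).flatten) w)
    (hgreatest : ∀ w', IsShuffle ((i₁ :: itl).flatten) ((j₁ :: jtl).flatten) w' → w' ≤ w) :
    ((∃ w', IsShuffle itl.flatten ((j₁ :: jtl).flatten) w' ∧ w = i₁ ++ w') ∨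
      (i₁ = j₁ ∧ ∃ w'', IsShuffle ((i₁ :: itl).flatten) jtl.flatten w'' ∧ w = j₁ ++ w'')) ∧
    (j₁ < i₁ → ∃ w', IsShuffle itl.flatten ((j₁ :: jtl).flatten) w' ∧ w = i₁ ++ w') := by
  set a := i₁.head hi with ha
  set M := itl.flatten with hM
  set N := jtl.flatten with hN
  have hLi : IsLyndon i₁ := hLI i₁ (by simp)
  have hLj : IsLyndon j₁ := hLJ j₁ (by simp)
  obtain ⟨p, q, hidec, hap, haq⟩ := decomp hi ha.symm hcounti
  obtain ⟨p', q', hjdec, hap', haq'⟩ := decomp hj hhead.symm hcountj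
  have hflatI : (i₁ :: itl).flatten = i₁ ++ M := List.flatten_cons ..
  have hflatJ : (j₁ :: jtl).flatten = j₁ ++ N := List.flatten_cons ..
  rw [hflatI, hflatJ] at hshuf
  simp only [hflatI, hflatJ] at hgreatest
  have hLi' : IsLyndon (a :: (p ++ a :: q)) := hidec ▸ hLi
  have hLj' : IsLyndon (a :: (p' ++ a :: q')) := hjdec ▸ hLj
  by_cases hc : j₁ ++ N ≤ i₁ ++ M
  · -- Case A : μ ≥ ν, the greatest shuffle consumes i₁ first
    have hc' : (p' ++ a :: q') ++ N ≤ (p ++ a :: q) ++ M := by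
      rw [hidec, hjdec] at hc
      simp only [List.cons_append] at hc
      exact cons_le_cons_iff.1 hc
    have hcond := suffix_cond (M := M) (O := (p' ++ a :: q') ++ N) hLi' hap haq hc'
    have hcond' : ∀ b₁ b₂, i₁ = b₁ ++ b₂ → b₂ ≠ [] → j₁ ++ N ≤ b₂ ++ M := by
      intro b₁ b₂ h1 h2
      have := hcond b₁ b₂ (hidec ▸ h1) h2
      simpa [hjdec] using this
    obtain ⟨w', hw', hweq, _⟩ := consume i₁ M (j₁ ++ N) w hshuf hgreatest hcond'
    rw [hflatJ]
    exact ⟨Or.inl ⟨w', hw', hweq⟩, fun _ => ⟨w', hw', hweq⟩⟩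
  · -- Case B : ν > μ
    push_neg at hc
    have heq : i₁ = j₁ := by
      rcases lt_or_eq_of_le hij with hlt | h
      · exfalso
        by_cases hpre : j₁ <+: i₁
        · obtain ⟨r, hr⟩ := hpre
          have hrne : r ≠ [] := by
            rintro rfl
            rw [List.append_nil] at hr
            exact (ne_of_lt hlt) hr
          have hcr : List.count a r = 0 := by
            rw [← hr, List.count_append] at hcounti
            omega
          obtain ⟨c, r', rfl⟩ : ∃ c r', r = c :: r' := by
            cases r with
            | nil => exact absurd rfl hrne
            | cons c r' => exact ⟨c, r', rfl⟩
          have hrsuf : (c :: r') <:+ i₁ := ⟨j₁, hr⟩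
          have hrneq : (c :: r') ≠ i₁ := by
            intro h
            rw [← hr] at h
            have hlen := congrArg List.length h
            rw [List.length_append] at hlen
            have hl : j₁.length = 0 := by omega
            exact hj (List.length_eq_zero_iff.1 hl)
          have hlt2 : i₁ < c :: r' := hLi.2 _ (by simp) hrneq hrsuf
          have hac : a < c := by
            have h1 : a ≤ c := by
              rw [hidec] at hlt2
              exact List.head_le_of_lt hlt2
            rcases lt_or_eq_of_le h1 with h2 | h2
            · exact h2
            · exfalso
              rw [← h2] at hcr
              simp [List.count_cons_self] at hcr
          have hrMN : (c :: r') ++ M < N := by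
            apply lt_of_append_lt j₁
            rw [← List.append_assoc, hr]
            exact hc
          have hNsmall : N < (c :: r') ++ M := by
            cases jtl with
            | nil => exact absurd hrMN (not_lt_nil' _)
            | cons j₂ jtl' =>
              have hLj2 : IsLyndon j₂ := hLJ j₂ (by simp)
              obtain ⟨e, j₂', rfl⟩ : ∃ e j₂', j₂ = e :: j₂' := by
                cases j₂ with
                | nil => exact absurd rfl hLj2.1
                | cons e j₂' => exact ⟨e, j₂', rfl⟩
              have hj2 : (e :: j₂') ≤ j₁ := (List.isChain_cons_cons.1 hdecJ).1
              have hea : e ≤ a := by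
                rw [hjdec] at hj2
                exact head_le_of_le hj2
              have : N = e :: (j₂' ++ jtl'.flatten) := by simp [hN]
              rw [this]
              exact List.Lex.rel (lt_of_le_of_lt hea hac)
          exact absurd hrMN (lt_asymm hNsmall)
        · exact absurd (lt_append_of_lt_of_not_prefix j₁ i₁ hlt hpre N M) (lt_asymm hc)
      · exact h.symm
    have hshuf' : IsShuffle (j₁ ++ N) (i₁ ++ M) w := hshuf.symm
    have hgreatest' : ∀ t, IsShuffle (j₁ ++ N) (i₁ ++ M) t → t ≤ w :=
      fun t ht => hgreatest t ht.symm
    have hc2 : (p ++ a :: q) ++ M ≤ (p' ++ a :: q') ++ N := by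
      have := le_of_lt hc
      rw [hidec, hjdec] at this
      simp only [List.cons_append] at this
      exact cons_le_cons_iff.1 this
    have hcond := suffix_cond (M := N) (O := (p ++ a :: q) ++ M) hLj' hap' haq' hc2
    have hcond' : ∀ b₁ b₂, j₁ = b₁ ++ b₂ → b₂ ≠ [] → i₁ ++ M ≤ b₂ ++ N := by
      intro b₁ b₂ h1 h2
      have := hcond b₁ b₂ (hjdec ▸ h1) h2
      simpa [hidec] using this
    obtain ⟨w'', hw'', hweq, _⟩ := consume j₁ N (i₁ ++ M) w hshuf' hgreatest' hcond'
    refine ⟨Or.inr ⟨heq, w'', ?_, hweq⟩, fun hlt => absurd (heq ▸ hlt) (lt_irrefl _)⟩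
    rw [hflatI]
    exact hw''.symm
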